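/- For every n ≥ 1, the integer n first leaves the n-th column of the Hurt-Sada array at row ⌊(n+1)/φ⌋; that is, A(i,n) = n for all i < ⌊(n+1)/φ⌋, and A(⌊(n+1)/φ⌋, n) ≠ n. -/

import Mathlib

/-- The golden ratio `(1 + √5)/2`. -/
noncomputable def phi : ℝ := (1 + Real.sqrt 5) / 2

/-- The Hurt-Sada array `A : ℕ → ℕ → ℕ`.  Row `0` is the identity sequence;
row `n+1` is obtained from row `n` by moving the entry `n+1` (located at the unique
position `p` with `A n p = n+1`) by `n+1` places to the right, shifting the jumped-over
entries one place left. -/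
noncomputable def A : ℕ → ℕ → ℕ
  | 0, k => k
  | n + 1, j =>
    let p := sInf {i | A n i = n + 1}
    if j < p then A n j
    else if j < p + (n + 1) then A n (j + 1)
    else if j = p + (n + 1) then n + 1
    else A n j

lemma phi_eq : phi = Real.goldenRatio := rfl
lemma phi_irr : Irrational phi := phi_eq ▸ Real.goldenRatio_irrational
lemma phi_sq : phi * phi = phi + 1 := by
  have := Real.goldenRatio_sq
  rw [sq] at this
  exact phi_eq ▸ this
lemma sqrt5_gt : (2:ℝ) < Real.sqrt 5 := by
  nlinarith [Real.sq_sqrt (by norm_num : (5:ℝ) ≥ 0), Real.sqrt_nonneg 5]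
lemma sqrt5_lt : Real.sqrt 5 < 7/3 := by
  nlinarith [Real.sq_sqrt (by norm_num : (5:ℝ) ≥ 0), Real.sqrt_nonneg 5]
lemma phi_gt : 3/2 < phi := by unfold phi; linarith [sqrt5_gt]
lemma phi_lt : phi < 5/3 := by unfold phi; linarith [sqrt5_lt]
lemma phi_pos : 0 < phi := by linarith [phi_gt]

noncomputable def q (v : ℕ) : ℕ := ⌊((v:ℝ)+1)/phi⌋₊

lemma q_ub' (v : ℕ) : (q v : ℝ) * phi < (v:ℝ) + 1 := by
  have h0 : (0:ℝ) ≤ ((v:ℝ)+1)/phi := by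
    apply div_nonneg (by positivity) (le_of_lt phi_pos)
  have h := Nat.floor_le h0
  have hle : (q v : ℝ) * phi ≤ (v:ℝ) + 1 := by
    rw [← le_div_iff₀ phi_pos]; exact h
  rcases eq_or_lt_of_le hle with heq | hlt
  · exfalso
    have hq0 : q v ≠ 0 := by
      intro h0'
      rw [h0'] at heq; push_cast at heq; nlinarith
    have hirr : Irrational (((q v : ℕ) : ℝ) * phi) := phi_irr.natCast_mul hq0
    have := hirr.ne_nat (v+1)
    push_cast at this
    exact this heq
  · exact hlt

lemma q_lb' (v : ℕ) : (v:ℝ) + 1 < ((q v : ℝ) + 1) * phi := by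
  have h := Nat.lt_floor_add_one (((v:ℝ)+1)/phi)
  calc (v:ℝ) + 1 = ((v:ℝ)+1)/phi * phi := by
        rw [div_mul_cancel₀]; exact ne_of_gt phi_pos
  _ < ((q v : ℝ) + 1) * phi := by
      apply mul_lt_mul_of_pos_right h phi_pos

lemma le_q {c v : ℕ} (h : (c:ℝ) * phi ≤ (v:ℝ) + 1) : c ≤ q v :=
  Nat.le_floor (by rw [le_div_iff₀ phi_pos]; exact h)

lemma q_mono : Monotone q := fun a b h => Nat.floor_mono (by
  rw [div_le_div_iff_of_pos_right phi_pos]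
  have : (a:ℝ) ≤ b := by exact_mod_cast h
  linarith)

lemma q_le_self (v : ℕ) : q v ≤ v := by
  have h := q_lb' v
  by_contra h'
  push_neg at h'
  have : (v:ℝ) + 1 ≤ (q v : ℝ) := by exact_mod_cast h'
  nlinarith [q_ub' v, phi_gt]

lemma q_zero : q 0 = 0 := by
  unfold q
  rw [Nat.floor_eq_zero]
  rw [div_lt_one phi_pos]; push_cast; linarith [phi_gt]

lemma phi_gt1 : 1 < phi := by linarith [phi_gt]

lemma A_succ (n j : ℕ) : A (n+1) j =
    if j < sInf {i | A n i = n + 1} then A n j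
    else if j < sInf {i | A n i = n + 1} + (n+1) then A n (j+1)
    else if j = sInf {i | A n i = n + 1} + (n+1) then n+1
    else A n j := rfl

noncomputable def P (m v : ℕ) : ℕ :=
  if m < q v then v
  else if m < v then v + q v - 1 - m
  else if m ≤ q v + v then q v + 2*v - m
  else v


lemma q_ub2 (v : ℕ) : (q v : ℝ) < ((v:ℝ)+1) * (phi - 1) := by
  have h2 := mul_lt_mul_of_pos_right (q_ub' v) (by linarith [phi_gt1] : (0:ℝ) < phi - 1)
  have e : (q v : ℝ) * phi * (phi - 1) = (q v : ℝ) := by linear_combination (q v : ℝ) * phi_sq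
  linarith

lemma q_lb2 (v : ℕ) : ((v:ℝ)+1) * (phi - 1) < (q v : ℝ) + 1 := by
  have h2 := mul_lt_mul_of_pos_right (q_lb' v) (by linarith [phi_gt1] : (0:ℝ) < phi - 1)
  have e : ((q v : ℝ) + 1) * phi * (phi - 1) = (q v : ℝ) + 1 := by
    linear_combination ((q v : ℝ) + 1) * phi_sq
  linarith

lemma S1 {m v : ℕ} (h : m + 2 ≤ q v) : q (m+1) + m + 2 ≤ v := by
  have hc : ((m:ℝ) + 2) ≤ (q v : ℝ) := by exact_mod_cast h
  have hc2 := mul_le_mul_of_nonneg_right hc phi_pos.le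
  have key : ((q (m+1) : ℝ)) + (m:ℝ) + 2 < (v:ℝ) + 1 := by
    have h1 := q_ub2 (m+1)
    push_cast at h1 ⊢
    nlinarith [q_ub' v]
  have : q (m+1) + m + 2 < v + 1 := by exact_mod_cast key
  omega

lemma S2b {m v : ℕ} (h2 : q v ≤ m + 1) : v ≤ q (m+1) + m + 1 := by
  have hc : (q v : ℝ) + 1 ≤ (m:ℝ) + 2 := by
    have : (q v : ℝ) ≤ (m:ℝ) + 1 := by exact_mod_cast h2
    linarith
  have hc2 := mul_le_mul_of_nonneg_right hc phi_pos.le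
  have key : (v:ℝ) < (q (m+1) : ℝ) + (m:ℝ) + 2 := by
    have h1 := q_lb2 (m+1)
    push_cast at h1 ⊢
    nlinarith [q_lb' v]
  have : v < q (m+1) + m + 2 := by exact_mod_cast key
  omega

lemma S3b {m v : ℕ} (h : m + 1 ≤ q v + v) : q (m+1) ≤ v := by
  have hc : ((m:ℝ) + 1) ≤ (q v : ℝ) + v := by exact_mod_cast h
  have e2 : (m:ℝ) + 2 < ((v:ℝ)+1) * phi := by nlinarith [q_ub2 v]
  have e3 := mul_lt_mul_of_pos_right e2 (by linarith [phi_gt1] : (0:ℝ) < phi - 1)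
  have e4 : ((v:ℝ)+1) * phi * (phi - 1) = (v:ℝ)+1 := by
    linear_combination ((v:ℝ)+1) * phi_sq
  have key : (q (m+1) : ℝ) < (v:ℝ) + 1 := by
    have h1 := q_ub2 (m+1)
    push_cast at h1 ⊢
    nlinarith
  have : q (m+1) < v + 1 := by exact_mod_cast key
  omega

lemma S4 {m v : ℕ} (h : q v + v + 1 ≤ m + 1) : v + 1 ≤ q (m+1) := by
  apply le_q
  have hc : ((q v : ℝ)) + v + 1 ≤ (m:ℝ) + 1 := by exact_mod_cast h
  push_cast
  nlinarith [q_lb2 v]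

lemma q_eq {v b : ℕ} (h1 : (b:ℝ)*phi ≤ (v:ℝ)+1) (h2 : (v:ℝ)+1 < ((b:ℝ)+1)*phi) : q v = b := by
  unfold q
  rw [Nat.floor_eq_iff (div_nonneg (by positivity) phi_pos.le)]
  refine ⟨by rw [le_div_iff₀ phi_pos]; exact h1, by rw [div_lt_iff₀ phi_pos]; exact h2⟩

lemma Pm_succ (m : ℕ) : P m (m+1) = q (m+1) := by
  unfold P
  have := q_le_self (m+1)
  split_ifs <;> omega

lemma Psurj (m j : ℕ) : ∃ v, P m v = j := by
  by_cases h1 : q j + j ≤ m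
  · refine ⟨j, ?_⟩
    unfold P
    have := q_le_self j
    split_ifs <;> omega
  by_cases h2 : m < q j
  · exact ⟨j, by unfold P; rw [if_pos h2]⟩
  push_neg at h1 h2
  have hj1 : 1 ≤ j := by
    rcases Nat.eq_zero_or_pos j with rfl | h
    · rw [q_zero] at h1 h2; omega
    · exact h
  set N := j + m + 2 with hN
  set a := q N with ha
  have hau : (a:ℝ) * phi < (N:ℝ) + 1 := q_ub' N
  have hal : (N:ℝ) + 1 < ((a:ℝ)+1) * phi := q_lb' N
  have haN : a ≤ N := q_le_self N
  -- m < q j + j and q j ≤ m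
  have hqju : (q j : ℝ) < ((j:ℝ)+1) * (phi - 1) := q_ub2 j
  have hqjl : ((j:ℝ)+1) * (phi - 1) < (q j : ℝ) + 1 := q_lb2 j
  have hmu : ((m:ℝ)) + 1 ≤ (q j : ℝ) + j := by exact_mod_cast h1
  have hml : (q j : ℝ) ≤ (m:ℝ) := by exact_mod_cast h2
  have hNr : (N:ℝ) = (j:ℝ) + m + 2 := by push_cast [hN]; ring
  rcases le_or_gt (N:ℝ) ((a:ℝ) * phi) with hA | hB
  · -- case A : N is a Beatty φ-number, N = ⌊a φ⌋
    have ha1 : 1 ≤ a := by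
      by_contra h
      push_neg at h
      interval_cases a
      · push_cast at hA; nlinarith
    obtain ⟨v, hv⟩ : ∃ v, a = v + 1 := ⟨a - 1, by omega⟩
    have hvr : ((v:ℝ)) + 1 = (a:ℝ) := by push_cast [hv]; ring
    have hb : q v = N - a := by
      have hbr : ((N - a : ℕ) : ℝ) = (N:ℝ) - a := by
        push_cast [Nat.cast_sub haN]; ring
      have e1 : (a:ℝ)*phi*phi = (a:ℝ)*(phi+1) := by linear_combination (a:ℝ)*phi_sq
      have e2 := mul_le_mul_of_nonneg_right hA phi_pos.le
      have e3 := mul_lt_mul_of_pos_right hau phi_pos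
      apply q_eq <;> rw [hvr, hbr]
      · linarith
      · linarith
    have hsum : q v + v = j + m + 1 := by
      have : a ≤ N := haN
      omega
    -- v ≥ m + 1
    have hvm : m + 1 ≤ v := by
      by_contra hcon
      push_neg at hcon
      have hqvl : j + 1 ≤ q v := by omega
      have h1r : ((j:ℝ)+1) ≤ (q v : ℝ) := by exact_mod_cast hqvl
      have h2r : (q v : ℝ) * phi < (v:ℝ) + 1 := q_ub' v
      have h3r : ((v:ℝ)) + 1 ≤ (m:ℝ) + 1 := by
        have : v ≤ m := by omega
        have := (Nat.cast_le (α := ℝ)).mpr this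
        linarith
      -- (j+1)φ < m+1  but  m+1 ≤ q j + j < (j+1)φ - 1
      linarith [mul_le_mul_of_nonneg_right h1r phi_pos.le, h2r, h3r, hmu, hqju]
    have hqvm : q v ≤ m + 1 := by
      by_contra hcon
      push_neg at hcon
      have hjv : v + 1 ≤ j := by omega
      have : q v ≤ q j := q_mono (by omega)
      omega
    refine ⟨v, ?_⟩
    unfold P
    split_ifs <;> omega
  · -- case B : N is a Beatty φ²-number
    have hNa : (a:ℝ) * phi ≤ (N:ℝ) := hB.le
    have h2a : N ≤ 2 * a := by
      have key : (N:ℝ) < 2 * a + 1 := by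
        have : ((a:ℝ)+1)*phi < ((a:ℝ)+1)*2 := by
          apply mul_lt_mul_of_pos_left (by linarith [phi_lt]) (by positivity)
        linarith
      have : N < 2 * a + 1 := by exact_mod_cast key
      omega
    have haltN : a < N := by
      have ha1 : 1 ≤ a := by omega
      have key : (a:ℝ) < (N:ℝ) := by
        have : (1:ℝ) ≤ (a:ℝ) := by exact_mod_cast ha1
        nlinarith [phi_gt1]
      exact_mod_cast key
    obtain ⟨v, hv⟩ : ∃ v, N - a = v + 1 := ⟨N - a - 1, by omega⟩
    have hvr : ((v:ℝ)) + 1 = (N:ℝ) - a := by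
      have : ((N - a : ℕ) : ℝ) = (N:ℝ) - a := by push_cast [Nat.cast_sub haN]; ring
      rw [← this, hv]; push_cast; ring
    have hc : q v = 2*a - N := by
      have hcr : ((2*a - N : ℕ) : ℝ) = 2*(a:ℝ) - N := by
        push_cast [Nat.cast_sub h2a]; ring
      have e1 : (a:ℝ)*phi*phi = (a:ℝ)*(phi+1) := by linear_combination (a:ℝ)*phi_sq
      have e1' : ((a:ℝ)+1)*phi*phi = ((a:ℝ)+1)*(phi+1) := by
        linear_combination ((a:ℝ)+1)*phi_sq
      have e2 := mul_le_mul_of_nonneg_right hNa phi_pos.le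
      have e3 := mul_lt_mul_of_pos_right hal phi_pos
      apply q_eq <;> rw [hvr, hcr]
      · linarith
      · linarith
    -- a ≥ j + 1  (so v ≤ m)  and  a ≥ m + 1 (so m ≤ q v + v)
    have haj : j + 1 ≤ a := by
      apply le_q
      rw [hNr]
      push_cast
      linarith [hqjl, hml]
    have ham : m + 1 ≤ a := by
      apply le_q
      rw [hNr]
      push_cast
      have e1 : (m:ℝ)+1 < ((j:ℝ)+1)*phi - 1 := by linarith [hqju, hmu]
      have e2 := mul_lt_mul_of_pos_right e1 (by linarith [phi_gt1] : (0:ℝ) < phi - 1)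
      have e3 : ((j:ℝ)+1)*phi*(phi-1) = (j:ℝ)+1 := by
        linear_combination ((j:ℝ)+1)*phi_sq
      linarith [phi_gt1]
    refine ⟨v, ?_⟩
    unfold P
    have hqv := q_le_self v
    split_ifs <;> omega

lemma invA : ∀ m v, A m (P m v) = v := by
  intro m
  induction m with
  | zero =>
    intro v
    have hPv : P 0 v = v := by
      unfold P
      have hq := q_le_self v
      rcases Nat.eq_zero_or_pos v with rfl | hv
      · rw [q_zero]; split_ifs <;> omega
      · have h1 : 1 ≤ q v := by
          apply le_q
          have : (1:ℝ) ≤ (v:ℝ) := by exact_mod_cast hv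
          push_cast
          linarith [phi_lt]
        split_ifs <;> omega
    rw [hPv]
    rfl
  | succ m ih =>
    have hs : sInf {i | A m i = m + 1} = q (m+1) := by
      have h1 : A m (q (m+1)) = m + 1 := by
        have h := ih (m+1)
        rwa [Pm_succ] at h
      have h2 : ∀ i ∈ {i | A m i = m + 1}, i = q (m+1) := by
        intro i hi
        obtain ⟨w, hw⟩ := Psurj m i
        have hthis : A m i = w := by rw [← hw]; exact ih w
        have hw' : w = m + 1 := by rw [hi] at hthis; omega
        rw [← hw, hw', Pm_succ]
      have hset : {i | A m i = m + 1} = {q (m+1)} :=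
        Set.eq_singleton_iff_unique_mem.mpr ⟨h1, h2⟩
      rw [hset, csInf_singleton]
    intro v
    rw [A_succ, hs]
    by_cases h1 : m + 1 < q v
    · have hPv : P (m+1) v = v := by unfold P; rw [if_pos h1]
      have hb : q (m+1) + m + 2 ≤ v := S1 (by omega)
      rw [hPv, if_neg (by omega), if_neg (by omega), if_neg (by omega)]
      have hPm : P m v = v := by unfold P; rw [if_pos (by omega)]
      have h := ih v
      rwa [hPm] at h
    · by_cases h2 : m + 1 < v
      · have hq : q v ≤ m + 1 := by omega
        have hPv : P (m+1) v = v + q v - 1 - (m+1) := by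
          unfold P; rw [if_neg h1, if_pos h2]
        have hqm : q (m+1) ≤ q v := q_mono (by omega)
        have hup : v ≤ q (m+1) + m + 1 := S2b hq
        have hPm : P m v = v + q v - 1 - m := by
          unfold P
          split_ifs <;> omega
        rw [hPv, if_neg (by omega), if_pos (by omega)]
        have he : v + q v - 1 - (m+1) + 1 = v + q v - 1 - m := by omega
        rw [he]
        have h := ih v
        rwa [hPm] at h
      · by_cases h3 : m + 1 ≤ q v + v
        · rcases Nat.lt_or_ge v (m+1) with hvm | hvm
          · -- v ≤ m
            have hql : q (m+1) ≤ v := S3b h3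
            have hqv := q_le_self v
            have hqm : q v ≤ q (m+1) := q_mono (by omega)
            have hPv : P (m+1) v = q v + 2*v - (m+1) := by
              unfold P; rw [if_neg h1, if_neg h2, if_pos h3]
            have hPm : P m v = q v + 2*v - m := by
              unfold P
              split_ifs <;> omega
            have hb1 : ¬ (q v + 2*v - (m+1) < q (m+1)) := by omega
            have hb2 : q v + 2*v - (m+1) < q (m+1) + (m+1) := by omega
            rw [hPv, if_neg hb1, if_pos hb2]
            have he : q v + 2*v - (m+1) + 1 = q v + 2*v - m := by omega
            rw [he]
            have h := ih v
            rwa [hPm] at h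
          · -- v = m+1
            have hv : v = m + 1 := by omega
            subst hv
            have hPv : P (m+1) (m+1) = q (m+1) + (m+1) := by
              unfold P
              rw [if_neg h1, if_neg h2, if_pos h3]
              omega
            rw [hPv, if_neg (by omega), if_neg (by omega), if_pos rfl]
        · -- q v + v < m + 1
          have hS : v + 1 ≤ q (m+1) := S4 (by omega)
          have hqv := q_le_self v
          have hPv : P (m+1) v = v := by
            unfold P
            rw [if_neg h1, if_neg h2, if_neg h3]
          have hPm : P m v = v := by
            unfold P
            split_ifs <;> omega
          rw [hPv, if_pos (by omega)]
          have h := ih v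
          rwa [hPm] at h

theorem hurt_sada_first_leaves (n : ℕ) (hn : 1 ≤ n) :
    (∀ i < ⌊((n : ℝ) + 1) / phi⌋₊, A i n = n) ∧
      A ⌊((n : ℝ) + 1) / phi⌋₊ n ≠ n := by
  have hqdef : ⌊((n : ℝ) + 1) / phi⌋₊ = q n := rfl
  constructor
  · intro i hi
    rw [hqdef] at hi
    have hP : P i n = n := by unfold P; rw [if_pos hi]
    have h := invA i n
    rwa [hP] at h
  · rw [hqdef]
    intro hcon
    obtain ⟨w, hw⟩ := Psurj (q n) n
    have hAw := invA (q n) w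
    rw [hw] at hAw
    have hwn : w = n := by rw [← hAw, hcon]
    rw [hwn] at hw
    have hPn : P (q n) n ≠ n := by
      have hqn := q_le_self n
      unfold P
      split_ifs <;> omega
    exact hPn hw
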